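/- Let X be a countably saturated linear order, L a linear order of countable character, and E a separable linear order with a distinguished element e₀. Then every order-embedding i : L ≅ L × {e₀} → X extends to an order-embedding of the lexicographic product L × E into X. -/

import Mathlib

/-- Countable saturation of a linear order. -/
def CSat (L : Type*) [LinearOrder L] : Prop :=
  DenselyOrdered L ∧ NoMinOrder L ∧ NoMaxOrder L ∧
  (∀ x : ℕ → L, StrictMono x → ∀ s, ¬ IsLUB (Set.range x) s) ∧
  (∀ y : ℕ → L, StrictAnti y → ∀ s, ¬ IsGLB (Set.range y) s) ∧
  (∀ x y : ℕ → L, StrictMono x → StrictAnti y → (∀ n, x n < y n) →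
    ∃ z, ∀ n, x n < z ∧ z < y n)

/-- `L` has countable character. -/
def CharLEOmega (L : Type*) [LinearOrder L] : Prop :=
  ∀ l : L, ∃ A B : Set L, A.Countable ∧ B.Countable ∧
    (∀ a ∈ A, ∀ b ∈ B, a < b) ∧
    {x | (∀ a ∈ A, a < x) ∧ (∀ b ∈ B, x < b)} = {l}

/-- A linear order is separable if it has a countable dense subset
(dense in the order topology). -/
def SepOrder (E : Type*) [LinearOrder E] : Prop :=
  ∃ D : Set E, D.Countable ∧ (letI := Preorder.topology E; Dense D)

noncomputable def natChain {α : Type*} (c0 : α) (f : α → ℕ → α) : ℕ → α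
  | 0 => c0
  | n+1 => f (natChain c0 f n) n

lemma seqMono {X : Type*} [LinearOrder X] {S : Set X} (hS : S.Countable)
    (hne : S.Nonempty) (hnomax : ∀ s ∈ S, ∃ t ∈ S, s < t) :
    ∃ u : ℕ → X, StrictMono u ∧ (∀ n, u n ∈ S) ∧ ∀ s ∈ S, ∃ n, s ≤ u n := by
  obtain ⟨e, he⟩ := hS.exists_eq_range hne
  have hmem : ∀ n, e n ∈ S := fun n => by rw [he]; exact Set.mem_range_self n
  have step : ∀ (c : X), c ∈ S → ∀ n : ℕ, ∃ t, t ∈ S ∧ c < t ∧ e n ≤ t := by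
    intro c hc n
    have hmax : max c (e n) ∈ S := by
      rcases max_cases c (e n) with ⟨h, _⟩ | ⟨h, _⟩ <;> rw [h]
      exacts [hc, hmem n]
    obtain ⟨t, ht, hlt⟩ := hnomax _ hmax
    exact ⟨t, ht, lt_of_le_of_lt (le_max_left _ _) hlt,
      le_of_lt (lt_of_le_of_lt (le_max_right _ _) hlt)⟩
  let F : {x // x ∈ S} → ℕ → {x // x ∈ S} := fun c n =>
    ⟨(step c.1 c.2 (n+1)).choose, (step c.1 c.2 (n+1)).choose_spec.1⟩
  let u : ℕ → {x // x ∈ S} := natChain ⟨e 0, hmem 0⟩ F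
  have hsucc : ∀ n, (u n).1 < (u (n+1)).1 ∧ e (n+1) ≤ (u (n+1)).1 := by
    intro n
    have : u (n+1) = F (u n) n := rfl
    rw [this]
    exact ⟨(step (u n).1 (u n).2 (n+1)).choose_spec.2.1,
      (step (u n).1 (u n).2 (n+1)).choose_spec.2.2⟩
  have hcof : ∀ n, e n ≤ (u n).1 := by
    intro n
    cases n with
    | zero => exact le_refl _
    | succ n => exact (hsucc n).2
  refine ⟨fun n => (u n).1, strictMono_nat_of_lt_succ (fun n => (hsucc n).1),
    fun n => (u n).2, fun s hs => ?_⟩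
  rw [he] at hs
  obtain ⟨n, rfl⟩ := hs
  exact ⟨n, hcof n⟩

lemma seqAnti {X : Type*} [LinearOrder X] {S : Set X} (hS : S.Countable)
    (hne : S.Nonempty) (hnomin : ∀ s ∈ S, ∃ t ∈ S, t < s) :
    ∃ u : ℕ → X, StrictAnti u ∧ (∀ n, u n ∈ S) ∧ ∀ s ∈ S, ∃ n, u n ≤ s := by
  obtain ⟨e, he⟩ := hS.exists_eq_range hne
  have hmem : ∀ n, e n ∈ S := fun n => by rw [he]; exact Set.mem_range_self n
  have step : ∀ (c : X), c ∈ S → ∀ n : ℕ, ∃ t, t ∈ S ∧ t < c ∧ t ≤ e n := by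
    intro c hc n
    have hmin : min c (e n) ∈ S := by
      rcases min_cases c (e n) with ⟨h, _⟩ | ⟨h, _⟩ <;> rw [h]
      exacts [hc, hmem n]
    obtain ⟨t, ht, hlt⟩ := hnomin _ hmin
    exact ⟨t, ht, lt_of_lt_of_le hlt (min_le_left _ _),
      le_of_lt (lt_of_lt_of_le hlt (min_le_right _ _))⟩
  let F : {x // x ∈ S} → ℕ → {x // x ∈ S} := fun c n =>
    ⟨(step c.1 c.2 (n+1)).choose, (step c.1 c.2 (n+1)).choose_spec.1⟩
  let u : ℕ → {x // x ∈ S} := natChain ⟨e 0, hmem 0⟩ F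
  have hsucc : ∀ n, (u (n+1)).1 < (u n).1 ∧ (u (n+1)).1 ≤ e (n+1) := by
    intro n
    have : u (n+1) = F (u n) n := rfl
    rw [this]
    exact ⟨(step (u n).1 (u n).2 (n+1)).choose_spec.2.1,
      (step (u n).1 (u n).2 (n+1)).choose_spec.2.2⟩
  have hcof : ∀ n, (u n).1 ≤ e n := by
    intro n
    cases n with
    | zero => exact le_refl _
    | succ n => exact (hsucc n).2
  refine ⟨fun n => (u n).1, strictAnti_nat_of_succ_lt (fun n => (hsucc n).1),
    fun n => (u n).2, fun s hs => ?_⟩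
  rw [he] at hs
  obtain ⟨n, rfl⟩ := hs
  exact ⟨n, hcof n⟩

lemma gapLemma {X : Type*} [LinearOrder X] (hX : CSat X) (hne : Nonempty X)
    (A B : Set X) (hA : A.Countable) (hB : B.Countable)
    (hAB : ∀ a ∈ A, ∀ b ∈ B, a < b)
    (hAup : A.Nonempty → ∃ w, ∀ a ∈ A, a ≤ w)
    (hBlow : B.Nonempty → ∃ w, ∀ b ∈ B, w ≤ b) :
    ∃ z, (∀ a ∈ A, a < z) ∧ (∀ b ∈ B, z < b) := by
  obtain ⟨hdense, hmin, hmax, hlub, hglb, hgap⟩ := hX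
  rcases A.eq_empty_or_nonempty with rfl | hAne
  · rcases B.eq_empty_or_nonempty with rfl | hBne
    · exact ⟨hne.some, by simp, by simp⟩
    · by_cases hBmin : ∃ b₀ ∈ B, ∀ b ∈ B, b₀ ≤ b
      · obtain ⟨b₀, hb₀, hleast⟩ := hBmin
        obtain ⟨z, hz⟩ := hmin.exists_lt b₀
        exact ⟨z, by simp, fun b hb => lt_of_lt_of_le hz (hleast b hb)⟩
      · obtain ⟨w, hw⟩ := hBlow hBne
        push_neg at hBmin
        refine ⟨w, by simp, fun b hb => ?_⟩
        obtain ⟨b', hb', hlt⟩ := hBmin b hb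
        exact lt_of_le_of_lt (hw b' hb') hlt
  · rcases B.eq_empty_or_nonempty with rfl | hBne
    · by_cases hAmax : ∃ a₀ ∈ A, ∀ a ∈ A, a ≤ a₀
      · obtain ⟨a₀, ha₀, hgreat⟩ := hAmax
        obtain ⟨z, hz⟩ := hmax.exists_gt a₀
        exact ⟨z, fun a ha => lt_of_le_of_lt (hgreat a ha) hz, by simp⟩
      · obtain ⟨w, hw⟩ := hAup hAne
        push_neg at hAmax
        refine ⟨w, fun a ha => ?_, by simp⟩
        obtain ⟨a', ha', hlt⟩ := hAmax a ha
        exact lt_of_lt_of_le hlt (hw a' ha')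
    · by_cases hAmax : ∃ a₀ ∈ A, ∀ a ∈ A, a ≤ a₀
      · obtain ⟨a₀, ha₀, hgreat⟩ := hAmax
        by_cases hBmin : ∃ b₀ ∈ B, ∀ b ∈ B, b₀ ≤ b
        · obtain ⟨b₀, hb₀, hleast⟩ := hBmin
          obtain ⟨z, hz1, hz2⟩ := exists_between (hAB a₀ ha₀ b₀ hb₀)
          exact ⟨z, fun a ha => lt_of_le_of_lt (hgreat a ha) hz1,
            fun b hb => lt_of_lt_of_le hz2 (hleast b hb)⟩
        · push_neg at hBmin
          obtain ⟨y, hy, hyS, hycof⟩ := seqAnti hB hBne (fun s hs => by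
            obtain ⟨t, ht, hlt⟩ := hBmin s hs; exact ⟨t, ht, hlt⟩)
          have ha₀lb : a₀ ∈ lowerBounds (Set.range y) := by
            rintro _ ⟨n, rfl⟩
            exact le_of_lt (hAB a₀ ha₀ _ (hyS n))
          have := hglb y hy a₀
          rw [IsGLB, IsGreatest] at this
          push_neg at this
          have hzgt := this ha₀lb
          rw [upperBounds, Set.mem_setOf_eq] at hzgt
          push_neg at hzgt
          obtain ⟨z, hzlb, hza₀⟩ := hzgt
          refine ⟨z, fun a ha => lt_of_le_of_lt (hgreat a ha) hza₀,
            fun b hb => ?_⟩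
          obtain ⟨n, hn⟩ := hycof b hb
          exact lt_of_le_of_lt (hzlb (Set.mem_range_self (n+1)))
            (lt_of_lt_of_le (hy (Nat.lt_succ_self n)) hn)
      · push_neg at hAmax
        obtain ⟨x, hx, hxS, hxcof⟩ := seqMono hA hAne (fun s hs => by
          obtain ⟨t, ht, hlt⟩ := hAmax s hs; exact ⟨t, ht, hlt⟩)
        by_cases hBmin : ∃ b₀ ∈ B, ∀ b ∈ B, b₀ ≤ b
        · obtain ⟨b₀, hb₀, hleast⟩ := hBmin
          have hb₀ub : b₀ ∈ upperBounds (Set.range x) := by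
            rintro _ ⟨n, rfl⟩
            exact le_of_lt (hAB _ (hxS n) b₀ hb₀)
          have := hlub x hx b₀
          rw [IsLUB, IsLeast] at this
          push_neg at this
          have hzlt := this hb₀ub
          rw [lowerBounds, Set.mem_setOf_eq] at hzlt
          push_neg at hzlt
          obtain ⟨z, hzub, hzb₀⟩ := hzlt
          refine ⟨z, fun a ha => ?_, fun b hb => lt_of_lt_of_le hzb₀ (hleast b hb)⟩
          obtain ⟨n, hn⟩ := hxcof a ha
          exact lt_of_le_of_lt hn (lt_of_lt_of_le (hx (Nat.lt_succ_self n))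
            (hzub (Set.mem_range_self (n+1))))
        · push_neg at hBmin
          obtain ⟨y, hy, hyS, hycof⟩ := seqAnti hB hBne (fun s hs => by
            obtain ⟨t, ht, hlt⟩ := hBmin s hs; exact ⟨t, ht, hlt⟩)
          obtain ⟨z, hz⟩ := hgap x y hx hy (fun n => hAB _ (hxS n) _ (hyS n))
          refine ⟨z, fun a ha => ?_, fun b hb => ?_⟩
          · obtain ⟨n, hn⟩ := hxcof a ha
            exact lt_of_le_of_lt hn (hz n).1
          · obtain ⟨n, hn⟩ := hycof b hb
            exact lt_of_lt_of_le (hz n).2 hn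

noncomputable def covRec {α : Type*} (c0 : α) (step : (ℕ → α) → ℕ → α) : ℕ → α
  | 0 => c0
  | n+1 => step (fun k => if h : k < n+1 then covRec c0 step k else c0) n
  decreasing_by exact h

lemma covRec_zero {α : Type*} (c0 : α) (step : (ℕ → α) → ℕ → α) : covRec c0 step 0 = c0 := by
  rw [covRec]

lemma covRec_succ {α : Type*} (c0 : α) (step : (ℕ → α) → ℕ → α) (n : ℕ) :
    covRec c0 step (n+1) = step (fun k => if h : k < n+1 then covRec c0 step k else c0) n := by
  rw [covRec]
lemma keyLemma {X : Type*} [LinearOrder X] (hX : CSat X)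
    {E : Type*} [LinearOrder E] (hE : SepOrder E) (e₀ : E)
    (P Q : Set X) (hP : P.Countable) (hQ : Q.Countable)
    (y₀ : X) (hyP : ∀ p ∈ P, p < y₀) (hyQ : ∀ q ∈ Q, y₀ < q) :
    ∃ f : E → X, StrictMono f ∧ f e₀ = y₀ ∧
      ∀ e, (∀ p ∈ P, p < f e) ∧ (∀ q ∈ Q, f e < q) := by
  classical
  have hne : Nonempty X := ⟨y₀⟩
  -- ceiling and floor
  obtain ⟨cp, hcp1, hcp2⟩ := gapLemma hX hne (insert y₀ P) Q (hP.insert y₀) hQ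
    (by rintro a (rfl | ha) b hb; exacts [hyQ b hb, lt_trans (hyP a ha) (hyQ b hb)])
    (fun _ => ⟨y₀, by rintro a (rfl | ha); exacts [le_refl _, le_of_lt (hyP a ha)]⟩)
    (fun _ => ⟨y₀, fun b hb => le_of_lt (hyQ b hb)⟩)
  obtain ⟨cm, hcm1, hcm2⟩ := gapLemma hX hne P (insert y₀ Q) hP (hQ.insert y₀)
    (by rintro a ha b (rfl | hb); exacts [hyP a ha, lt_trans (hyP a ha) (hyQ b hb)])
    (fun _ => ⟨y₀, fun a ha => le_of_lt (hyP a ha)⟩)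
    (fun _ => ⟨y₀, by rintro b (rfl | hb); exacts [le_refl _, le_of_lt (hyQ b hb)]⟩)
  have hycp : y₀ < cp := hcp1 y₀ (Set.mem_insert _ _)
  have hcmy : cm < y₀ := hcm2 y₀ (Set.mem_insert _ _)
  set P' : Set X := insert cm P with hP'def
  set Q' : Set X := insert cp Q with hQ'def
  have hP' : P'.Countable := hP.insert cm
  have hQ' : Q'.Countable := hQ.insert cp
  have hPy' : ∀ p ∈ P', p < y₀ := by rintro p (rfl | hp); exacts [hcmy, hyP p hp]
  have hyQ'' : ∀ q ∈ Q', y₀ < q := by rintro q (rfl | hq); exacts [hycp, hyQ q hq]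
  have hPQ' : ∀ p ∈ P', ∀ q ∈ Q', p < q :=
    fun p hp q hq => lt_trans (hPy' p hp) (hyQ'' q hq)
  have hcmP : cm ∈ P' := Set.mem_insert _ _
  have hcpQ : cp ∈ Q' := Set.mem_insert _ _
  -- the countable dense set, enumerated with d 0 = e₀
  obtain ⟨D, hDc, hDd⟩ := hE
  obtain ⟨d₀, hd₀⟩ := (hDc.insert e₀).exists_eq_range (Set.insert_nonempty _ _)
  set d : ℕ → E := fun n => Nat.rec e₀ (fun k _ => d₀ k) n with hddef
  have hd0 : d 0 = e₀ := rfl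
  have hDsub : D ⊆ Set.range d := by
    intro x hx
    have hx' : x ∈ Set.range d₀ := by rw [← hd₀]; exact Set.mem_insert_of_mem _ hx
    obtain ⟨k, rfl⟩ := hx'
    exact ⟨k + 1, rfl⟩
  have hDdense : ∀ a b : E, a < b → (∃ c, a < c ∧ c < b) → ∃ k, a < d k ∧ d k < b := by
    rintro a b _ ⟨c, hc1, hc2⟩
    letI := Preorder.topology E
    haveI : OrderTopology E := ⟨rfl⟩
    have hDd' : Dense D := hDd
    obtain ⟨x, hxD, hxI⟩ := hDd'.exists_mem_open isOpen_Ioo ⟨c, hc1, hc2⟩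
    obtain ⟨k, rfl⟩ := hDsub hxD
    exact ⟨k, hxI.1, hxI.2⟩
  -- the recursive construction on the enumeration
  set step : (ℕ → X) → ℕ → X := fun prev n =>
    if h : ∃ z : X, (∀ k ≤ n, d k < d (n+1) → prev k < z) ∧
        (∀ k ≤ n, d (n+1) < d k → z < prev k) ∧
        (∀ p ∈ P', p < z) ∧ (∀ q ∈ Q', z < q) then h.choose else y₀
    with hstepdef
  set g : ℕ → X := covRec y₀ step with hgdef
  have hg0 : g 0 = y₀ := by rw [hgdef]; exact covRec_zero y₀ step
  have main : ∀ n : ℕ, ((∀ p ∈ P', p < g n) ∧ (∀ q ∈ Q', g n < q)) ∧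
      ∀ k, k < n → (d k < d n → g k < g n) ∧ (d n < d k → g n < g k) := by
    intro n
    induction n using Nat.strong_induction_on with
    | _ n IH =>
      match n with
      | 0 =>
        rw [hg0]
        exact ⟨⟨hPy', hyQ''⟩, fun k hk => absurd hk (Nat.not_lt_zero k)⟩
      | n + 1 =>
        set prevfn : ℕ → X := fun k => if _ : k < n+1 then g k else y₀ with hprevdef
        have hprev : ∀ k, k ≤ n → prevfn k = g k := by
          intro k hk
          rw [hprevdef]
          exact dif_pos (Nat.lt_succ_of_le hk)
        have hgsucc : g (n+1) = step prevfn n := by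
          rw [hprevdef, hgdef]
          exact covRec_succ y₀ step n
        have hU : ∀ k, k ≤ n → (∀ p ∈ P', p < g k) ∧ (∀ q ∈ Q', g k < q) :=
          fun k hk => (IH k (Nat.lt_succ_of_le hk)).1
        have hord : ∀ k k', k ≤ n → k' ≤ n → d k < d k' → g k < g k' := by
          intro k k' hk hk' hlt
          rcases lt_trichotomy k k' with h | rfl | h
          · exact ((IH k' (Nat.lt_succ_of_le hk')).2 k h).1 hlt
          · exact absurd hlt (lt_irrefl _)
          · exact ((IH k (Nat.lt_succ_of_le hk)).2 k' h).2 hlt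
        have hex : ∃ z : X, (∀ k ≤ n, d k < d (n+1) → prevfn k < z) ∧
            (∀ k ≤ n, d (n+1) < d k → z < prevfn k) ∧
            (∀ p ∈ P', p < z) ∧ (∀ q ∈ Q', z < q) := by
          have hfinA : ({x | ∃ k ≤ n, d k < d (n+1) ∧ x = g k} : Set X).Countable := by
            refine Set.Finite.countable (Set.Finite.subset ((Set.finite_Iic n).image g) ?_)
            rintro x ⟨k, hk, _, rfl⟩; exact ⟨k, hk, rfl⟩
          have hfinB : ({x | ∃ k ≤ n, d (n+1) < d k ∧ x = g k} : Set X).Countable := by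
            refine Set.Finite.countable (Set.Finite.subset ((Set.finite_Iic n).image g) ?_)
            rintro x ⟨k, hk, _, rfl⟩; exact ⟨k, hk, rfl⟩
          obtain ⟨z, hz1, hz2⟩ := gapLemma hX hne
            (P' ∪ {x | ∃ k ≤ n, d k < d (n+1) ∧ x = g k})
            (Q' ∪ {x | ∃ k ≤ n, d (n+1) < d k ∧ x = g k})
            (hP'.union hfinA) (hQ'.union hfinB)
            (by
              rintro a (ha | ⟨k, hk, hdk, rfl⟩) b (hb | ⟨k', hk', hdk', rfl⟩)
              · exact hPQ' a ha b hb
              · exact (hU k' hk').1 a ha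
              · exact (hU k hk).2 b hb
              · exact hord k k' hk hk' (lt_trans hdk hdk'))
            (fun _ => ⟨cp, by
              rintro a (ha | ⟨k, hk, _, rfl⟩)
              · exact le_of_lt (hPQ' a ha cp hcpQ)
              · exact le_of_lt ((hU k hk).2 cp hcpQ)⟩)
            (fun _ => ⟨cm, by
              rintro b (hb | ⟨k, hk, _, rfl⟩)
              · exact le_of_lt (hPQ' cm hcmP b hb)
              · exact le_of_lt ((hU k hk).1 cm hcmP)⟩)
          refine ⟨z, ?_, ?_, ?_, ?_⟩
          · intro k hk hdk
            rw [hprev k hk]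
            exact hz1 _ (Set.mem_union_right _ ⟨k, hk, hdk, rfl⟩)
          · intro k hk hdk
            rw [hprev k hk]
            exact hz2 _ (Set.mem_union_right _ ⟨k, hk, hdk, rfl⟩)
          · exact fun p hp => hz1 p (Set.mem_union_left _ hp)
          · exact fun q hq => hz2 q (Set.mem_union_left _ hq)
        have hgval : g (n+1) = hex.choose := by
          rw [hgsucc, hstepdef]
          exact dif_pos hex
        obtain ⟨hs1, hs2, hs3, hs4⟩ := hex.choose_spec
        rw [← hgval] at hs1 hs2 hs3 hs4
        refine ⟨⟨hs3, hs4⟩, fun k hk => ?_⟩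
        have hk' : k ≤ n := Nat.lt_succ_iff.mp hk
        exact ⟨fun h => by rw [← hprev k hk']; exact hs1 k hk' h,
          fun h => by rw [← hprev k hk']; exact hs2 k hk' h⟩
  have hU : ∀ k, (∀ p ∈ P', p < g k) ∧ (∀ q ∈ Q', g k < q) := fun k => (main k).1
  have hord : ∀ k k', d k < d k' → g k < g k' := by
    intro k k' hlt
    rcases lt_trichotomy k k' with h | rfl | h
    · exact ((main k').2 k h).1 hlt
    · exact absurd hlt (lt_irrefl _)
    · exact ((main k).2 k' h).2 hlt
  -- pairs for cuts
  set PairGood : Set ℕ → X → X → Prop := fun s z z' =>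
    z < z' ∧ (∀ p ∈ P', p < z) ∧ (∀ q ∈ Q', z' < q) ∧
    (∀ k, k ∈ s → g k < z) ∧ (∀ k, k ∉ s → z' < g k) with hPGdef
  set pr : Set ℕ → X × X := fun s =>
    if h : ∃ zz : X × X, PairGood s zz.1 zz.2 then h.choose else (y₀, y₀) with hprdef
  have pairExists : ∀ e : E, e ∉ Set.range d →
      ∃ zz : X × X, PairGood {k | d k < e} zz.1 zz.2 := by
    intro e he
    have hcA : ({x | ∃ k, d k < e ∧ x = g k} : Set X).Countable := by
      refine Set.Countable.mono ?_ (Set.countable_range g)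
      rintro x ⟨k, _, rfl⟩; exact ⟨k, rfl⟩
    have hcB : ({x | ∃ k, e < d k ∧ x = g k} : Set X).Countable := by
      refine Set.Countable.mono ?_ (Set.countable_range g)
      rintro x ⟨k, _, rfl⟩; exact ⟨k, rfl⟩
    have hAB : ∀ a ∈ P' ∪ {x | ∃ k, d k < e ∧ x = g k},
        ∀ b ∈ Q' ∪ {x | ∃ k, e < d k ∧ x = g k}, a < b := by
      rintro a (ha | ⟨k, hk, rfl⟩) b (hb | ⟨k', hk', rfl⟩)
      · exact hPQ' a ha b hb
      · exact (hU k').1 a ha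
      · exact (hU k).2 b hb
      · exact hord k k' (lt_trans hk hk')
    obtain ⟨z, hz1, hz2⟩ := gapLemma hX hne
      (P' ∪ {x | ∃ k, d k < e ∧ x = g k}) (Q' ∪ {x | ∃ k, e < d k ∧ x = g k})
      (hP'.union hcA) (hQ'.union hcB) hAB
      (fun _ => ⟨cp, by
        rintro a (ha | ⟨k, _, rfl⟩)
        · exact le_of_lt (hPQ' a ha cp hcpQ)
        · exact le_of_lt ((hU k).2 cp hcpQ)⟩)
      (fun _ => ⟨cm, by
        rintro b (hb | ⟨k, _, rfl⟩)
        · exact le_of_lt (hPQ' cm hcmP b hb)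
        · exact le_of_lt ((hU k).1 cm hcmP)⟩)
    obtain ⟨z', hz'1, hz'2⟩ := gapLemma hX hne
      (insert z (P' ∪ {x | ∃ k, d k < e ∧ x = g k}))
      (Q' ∪ {x | ∃ k, e < d k ∧ x = g k})
      ((hP'.union hcA).insert z) (hQ'.union hcB)
      (by rintro a (rfl | ha) b hb; exacts [hz2 b hb, hAB a ha b hb])
      (fun _ => ⟨cp, by
        rintro a (rfl | (ha | ⟨k, _, rfl⟩))
        · exact le_of_lt (hz2 cp (Set.mem_union_left _ hcpQ))
        · exact le_of_lt (hPQ' a ha cp hcpQ)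
        · exact le_of_lt ((hU k).2 cp hcpQ)⟩)
      (fun _ => ⟨cm, by
        rintro b (hb | ⟨k, _, rfl⟩)
        · exact le_of_lt (hPQ' cm hcmP b hb)
        · exact le_of_lt ((hU k).1 cm hcmP)⟩)
    refine ⟨(z, z'), hz'1 z (Set.mem_insert _ _), ?_, ?_, ?_, ?_⟩
    · exact fun p hp => hz1 p (Set.mem_union_left _ hp)
    · exact fun q hq => hz'2 q (Set.mem_union_left _ hq)
    · exact fun k hk => hz1 _ (Set.mem_union_right _ ⟨k, hk, rfl⟩)
    · intro k hk
      have hlt : e < d k := lt_of_le_of_ne (not_lt.mp hk) (fun h => he ⟨k, h.symm⟩)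
      exact hz'2 _ (Set.mem_union_right _ ⟨k, hlt, rfl⟩)
  have hpr : ∀ e : E, e ∉ Set.range d →
      PairGood {k | d k < e} (pr {k | d k < e}).1 (pr {k | d k < e}).2 := by
    intro e he
    have key : pr {k | d k < e} = (pairExists e he).choose := by
      rw [hprdef]
      exact dif_pos (pairExists e he)
    rw [key]
    exact (pairExists e he).choose_spec
  have hprlt : ∀ e : E, e ∉ Set.range d → (pr {k | d k < e}).1 < (pr {k | d k < e}).2 :=
    fun e he => (hpr e he).1
  -- the embedding
  set W : E → Prop := fun e => ∃ e', e < e' ∧ ∀ k, d k < e ↔ d k < e' with hWdef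
  set f : E → X := fun e =>
    if h : ∃ n, d n = e then g (Nat.find h)
    else if W e then (pr {k | d k < e}).1 else (pr {k | d k < e}).2
    with hfdef
  have hfd : ∀ e (h : ∃ n, d n = e), f e = g (Nat.find h) := by
    intro e h; rw [hfdef]; exact dif_pos h
  have hfnd : ∀ e, e ∉ Set.range d →
      f e = if W e then (pr {k | d k < e}).1 else (pr {k | d k < e}).2 := by
    intro e he
    have h' : ¬ ∃ n, d n = e := fun ⟨n, hn⟩ => he ⟨n, hn⟩
    rw [hfdef]; exact dif_neg h'
  -- no three elements share a cut
  have hWfalse : ∀ e e' : E, e < e' → (∀ k, d k < e ↔ d k < e') → ¬ W e' := by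
    rintro e e' hlt hiff ⟨e'', hlt', hiff'⟩
    obtain ⟨k, hk1, hk2⟩ := hDdense e e'' (lt_trans hlt hlt') ⟨e', hlt, hlt'⟩
    exact absurd ((hiff k).mpr ((hiff' k).mpr hk2)) (not_lt.mpr (le_of_lt hk1))
  have hmono : StrictMono f := by
    intro e e' hlt
    by_cases he : ∃ n, d n = e
    · by_cases he' : ∃ n, d n = e'
      · rw [hfd e he, hfd e' he']
        apply hord
        rw [Nat.find_spec he, Nat.find_spec he']
        exact hlt
      · have he'r : e' ∉ Set.range d := fun ⟨n, hn⟩ => he' ⟨n, hn⟩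
        rw [hfd e he, hfnd e' he'r]
        have hpg := hpr e' he'r
        have hmem : Nat.find he ∈ {k | d k < e'} := by
          rw [Set.mem_setOf_eq, Nat.find_spec he]
          exact hlt
        have h1 : g (Nat.find he) < (pr {k | d k < e'}).1 := hpg.2.2.2.1 _ hmem
        split
        · exact h1
        · exact lt_trans h1 hpg.1
    · have her : e ∉ Set.range d := fun ⟨n, hn⟩ => he ⟨n, hn⟩
      have hpg := hpr e her
      by_cases he' : ∃ n, d n = e'
      · rw [hfnd e her, hfd e' he']
        have hmem : Nat.find he' ∉ {k | d k < e} := by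
          rw [Set.mem_setOf_eq, Nat.find_spec he']
          exact not_lt.mpr (le_of_lt hlt)
        have h2 : (pr {k | d k < e}).2 < g (Nat.find he') := hpg.2.2.2.2 _ hmem
        split
        · exact lt_trans hpg.1 h2
        · exact h2
      · have he'r : e' ∉ Set.range d := fun ⟨n, hn⟩ => he' ⟨n, hn⟩
        have hpg' := hpr e' he'r
        rw [hfnd e her, hfnd e' he'r]
        by_cases hss : ∀ k, d k < e ↔ d k < e'
        · have hseq : {k | d k < e} = {k | d k < e'} := Set.ext (fun k => hss k)
          have hWe : W e := ⟨e', hlt, hss⟩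
          have hWe' : ¬ W e' := hWfalse e e' hlt hss
          rw [if_pos hWe, if_neg hWe', ← hseq]
          exact hpg.1
        · push_neg at hss
          obtain ⟨k, hk⟩ := hss
          have hd1 : ¬ d k < e ∧ d k < e' := by
            rcases hk with ⟨h1, h2⟩ | ⟨h1, h2⟩
            · exact absurd (lt_trans h1 hlt) (not_lt.mpr h2)
            · exact ⟨not_lt.mpr h1, h2⟩
          have hA : (pr {k' | d k' < e}).2 < g k := hpg.2.2.2.2 k hd1.1
          have hB : g k < (pr {k' | d k' < e'}).1 := hpg'.2.2.2.1 k hd1.2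
          have hchain : (pr {k' | d k' < e}).2 < (pr {k' | d k' < e'}).1 := lt_trans hA hB
          have hle : (if W e then (pr {k' | d k' < e}).1 else (pr {k' | d k' < e}).2) ≤
              (pr {k' | d k' < e}).2 := by
            split
            · exact le_of_lt hpg.1
            · exact le_refl _
          have hge : (pr {k' | d k' < e'}).1 ≤
              (if W e' then (pr {k' | d k' < e'}).1 else (pr {k' | d k' < e'}).2) := by
            split
            · exact le_refl _
            · exact le_of_lt hpg'.1
          exact lt_of_le_of_lt hle (lt_of_lt_of_le hchain hge)
  have hfe₀ : f e₀ = y₀ := by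
    have h : ∃ n, d n = e₀ := ⟨0, hd0⟩
    rw [hfd e₀ h]
    have h0 : Nat.find h = 0 := (Nat.find_eq_zero h).mpr hd0
    rw [h0]
    exact hg0
  refine ⟨f, hmono, hfe₀, fun e => ?_⟩
  by_cases he : ∃ n, d n = e
  · rw [hfd e he]
    exact ⟨fun p hp => (hU _).1 p (Set.mem_insert_of_mem _ hp),
           fun q hq => (hU _).2 q (Set.mem_insert_of_mem _ hq)⟩
  · have her : e ∉ Set.range d := fun ⟨n, hn⟩ => he ⟨n, hn⟩
    have hpg := hpr e her
    rw [hfnd e her]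
    constructor
    · intro p hp
      have h1 : p < (pr {k | d k < e}).1 := hpg.2.1 p (Set.mem_insert_of_mem _ hp)
      split
      · exact h1
      · exact lt_trans h1 hpg.1
    · intro q hq
      have h2 : (pr {k | d k < e}).2 < q := hpg.2.2.1 q (Set.mem_insert_of_mem _ hq)
      split
      · exact lt_trans hpg.1 h2
      · exact h2

theorem stmt8 (X L E : Type) [LinearOrder X] [LinearOrder L] [LinearOrder E]
    (hX : CSat X) (hL : CharLEOmega L) (hE : SepOrder E) (e₀ : E) (i : L ↪o X) :
    ∃ j : (L ×ₗ E) ↪o X, ∀ l : L, j (toLex (l, e₀)) = i l := by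

  classical
  haveI : DenselyOrdered X := hX.1
  choose A B hA hB hABlt hcut using hL
  have hcutl : ∀ l, (∀ a ∈ A l, a < l) ∧ (∀ b ∈ B l, l < b) := by
    intro l
    have h : l ∈ ({x | (∀ a ∈ A l, a < x) ∧ (∀ b ∈ B l, x < b)} : Set L) := by
      rw [hcut l]; exact Set.mem_singleton l
    exact h
  have hcutne : ∀ l x, x ≠ l → (∃ a ∈ A l, x ≤ a) ∨ (∃ b ∈ B l, b ≤ x) := by
    intro l x hx
    have h : x ∉ ({y | (∀ a ∈ A l, a < y) ∧ (∀ b ∈ B l, y < b)} : Set L) := by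
      rw [hcut l]; simpa using hx
    rw [Set.mem_setOf_eq] at h
    by_cases h1 : ∀ a ∈ A l, a < x
    · right
      have h2 : ¬ ∀ b ∈ B l, x < b := fun h2 => h ⟨h1, h2⟩
      push_neg at h2
      obtain ⟨b, hb, hbx⟩ := h2
      exact ⟨b, hb, hbx⟩
    · left
      push_neg at h1
      obtain ⟨a, ha, hxa⟩ := h1
      exact ⟨a, ha, hxa⟩
  -- midpoints for covering pairs
  have hmid : ∀ l l' : L, l ⋖ l' → ∃ m : X, i l < m ∧ m < i l' :=
    fun l l' h => exists_between (i.strictMono h.1)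
  set M : L → L → X := fun l l' => if h : l ⋖ l' then (hmid l l' h).choose else i l with hMdef
  have hMval : ∀ l l' (h : l ⋖ l'), M l l' = (hmid l l' h).choose := by
    intro l l' h; rw [hMdef]; exact dif_pos h
  have hM1 : ∀ l l' (h : l ⋖ l'), i l < M l l' := by
    intro l l' h; rw [hMval l l' h]; exact (hmid l l' h).choose_spec.1
  have hM2 : ∀ l l' (h : l ⋖ l'), M l l' < i l' := by
    intro l l' h; rw [hMval l l' h]; exact (hmid l l' h).choose_spec.2
  set Pl : L → Set X := fun l => (i '' A l) ∪ {x | ∃ c, c ⋖ l ∧ x = M c l} with hPldef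
  set Ql : L → Set X := fun l => (i '' B l) ∪ {x | ∃ c, l ⋖ c ∧ x = M l c} with hQldef
  have hcovuniq_lt : ∀ l : L, ∀ c c', c ⋖ l → c' ⋖ l → c = c' := by
    intro l c c' hc hc'
    rcases lt_trichotomy c c' with h | h | h
    · exact absurd hc'.1 (hc.2 h)
    · exact h
    · exact absurd hc.1 (hc'.2 h)
  have hcovuniq_gt : ∀ l : L, ∀ c c', l ⋖ c → l ⋖ c' → c = c' := by
    intro l c c' hc hc'
    rcases lt_trichotomy c c' with h | h | h
    · exact absurd h (hc'.2 hc.1)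
    · exact h
    · exact absurd h (hc.2 hc'.1)
  have hPlc : ∀ l, (Pl l).Countable := by
    intro l
    refine Set.Countable.union ((hA l).image i) (Set.Subsingleton.countable ?_)
    rintro x ⟨c, hc, rfl⟩ y ⟨c', hc', rfl⟩
    rw [hcovuniq_lt l c c' hc hc']
  have hQlc : ∀ l, (Ql l).Countable := by
    intro l
    refine Set.Countable.union ((hB l).image i) (Set.Subsingleton.countable ?_)
    rintro x ⟨c, hc, rfl⟩ y ⟨c', hc', rfl⟩
    rw [hcovuniq_gt l c c' hc hc']
  have hyPl : ∀ l, ∀ p ∈ Pl l, p < i l := by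
    rintro l p (⟨a, ha, rfl⟩ | ⟨c, hc, rfl⟩)
    · exact i.strictMono ((hcutl l).1 a ha)
    · exact hM2 c l hc
  have hyQl : ∀ l, ∀ q ∈ Ql l, i l < q := by
    rintro l q (⟨b, hb, rfl⟩ | ⟨c, hc, rfl⟩)
    · exact i.strictMono ((hcutl l).2 b hb)
    · exact hM1 l c hc
  have hkey : ∀ l : L, ∃ f : E → X, StrictMono f ∧ f e₀ = i l ∧
      ∀ e, (∀ p ∈ Pl l, p < f e) ∧ (∀ q ∈ Ql l, f e < q) :=
    fun l => keyLemma hX hE e₀ (Pl l) (Ql l) (hPlc l) (hQlc l) (i l) (hyPl l) (hyQl l)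
  choose f hfmono hfe₀ hfU using hkey
  have hsep : ∀ l l' : L, l < l' → ∀ x y : X,
      ((∀ p ∈ Pl l, p < x) ∧ (∀ q ∈ Ql l, x < q)) →
      ((∀ p ∈ Pl l', p < y) ∧ (∀ q ∈ Ql l', y < q)) → x < y := by
    intro l l' hll x y hx hy
    by_cases hcov : l ⋖ l'
    · exact lt_trans (hx.2 _ (Set.mem_union_right _ ⟨l', hcov, rfl⟩))
        (hy.1 _ (Set.mem_union_right _ ⟨l, hcov, rfl⟩))
    · obtain ⟨c, hc1, hc2⟩ := (not_covBy_iff hll).mp hcov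
      have h1 : ∃ b ∈ B l, b ≤ c := by
        rcases hcutne l c (ne_of_gt hc1) with ⟨a, ha, hca⟩ | h
        · exact absurd (lt_of_le_of_lt hca ((hcutl l).1 a ha)) (lt_asymm hc1)
        · exact h
      obtain ⟨b, hb, hbc⟩ := h1
      have h2 : ∃ a ∈ A l', c ≤ a := by
        rcases hcutne l' c (ne_of_lt hc2) with h | ⟨b', hb', hbc'⟩
        · exact h
        · exact absurd (lt_of_le_of_lt hbc' hc2) (lt_asymm ((hcutl l').2 b' hb'))
      obtain ⟨a, ha, hca⟩ := h2
      have hxb : x < i b := hx.2 _ (Set.mem_union_left _ ⟨b, hb, rfl⟩)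
      have hay : i a < y := hy.1 _ (Set.mem_union_left _ ⟨a, ha, rfl⟩)
      exact lt_trans (lt_of_lt_of_le hxb (i.monotone (le_trans hbc hca))) hay
  have hjmono : StrictMono (fun p : L ×ₗ E => f (ofLex p).1 (ofLex p).2) := by
    intro p q hpq
    have hpq' : toLex (ofLex p) < toLex (ofLex q) := hpq
    rcases (Prod.Lex.lt_iff (x := p) (y := q)).mp hpq' with h1 | ⟨h1, h2⟩
    · exact hsep _ _ h1 _ _ (hfU (ofLex p).1 (ofLex p).2) (hfU (ofLex q).1 (ofLex q).2)
    · dsimp only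
      rw [h1]
      exact hfmono _ h2
  refine ⟨OrderEmbedding.ofStrictMono _ hjmono, fun l => ?_⟩
  exact hfe₀ l
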